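/- Let □mod7 := {n ∈ ℕ, n ≥ 1 | ∃ x ≥ 1 with x² ≡ n (mod 7)} be the set of positive integers that are congruent to a square modulo 7. Then M(□mod7) = {1, 2, 4, 7, 8, 9, 30, 35, 36, 50, 53, 56, 60, 63, 65, 333, 555, 666}. -/

import Mathlib

/-- `Subseq x y` means the decimal digit string of `x` is a subsequence of that of `y`. -/
def Subseq (x y : ℕ) : Prop := (Nat.digits 10 x).Sublist (Nat.digits 10 y)

/-- The minimal set of `S`: elements of `S` containing no smaller element of `S`
as a subsequence of their decimal digits. -/
def minimalSet (S : Set ℕ) : Set ℕ := {s ∈ S | ¬ ∃ n ∈ S, n < s ∧ Subseq n s}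

lemma memS_iff (n : ℕ) :
    (1 ≤ n ∧ ∃ x : ℕ, 1 ≤ x ∧ x ^ 2 ≡ n [MOD 7]) ↔
      1 ≤ n ∧ (n % 7 = 0 ∨ n % 7 = 1 ∨ n % 7 = 2 ∨ n % 7 = 4) := by
  constructor
  · rintro ⟨h1, x, hx1, hmod⟩
    refine ⟨h1, ?_⟩
    have key : (x % 7) ^ 2 % 7 = n % 7 := by rw [← Nat.pow_mod]; exact hmod
    have h7 : x % 7 = 0 ∨ x % 7 = 1 ∨ x % 7 = 2 ∨ x % 7 = 3 ∨ x % 7 = 4 ∨ x % 7 = 5 ∨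
        x % 7 = 6 := by omega
    rcases h7 with h | h | h | h | h | h | h <;> rw [h] at key <;> norm_num at key <;> omega
  · rintro ⟨h1, hm⟩
    refine ⟨h1, ?_⟩
    have e7 : (7:ℕ) ^ 2 = 49 := by norm_num
    have e1 : (1:ℕ) ^ 2 = 1 := by norm_num
    have e3 : (3:ℕ) ^ 2 = 9 := by norm_num
    have e2 : (2:ℕ) ^ 2 = 4 := by norm_num
    rcases hm with h | h | h | h
    · exact ⟨7, by norm_num, show 7 ^ 2 % 7 = n % 7 by omega⟩
    · exact ⟨1, by norm_num, show 1 ^ 2 % 7 = n % 7 by omega⟩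
    · exact ⟨3, by norm_num, show 3 ^ 2 % 7 = n % 7 by omega⟩
    · exact ⟨2, by norm_num, show 2 ^ 2 % 7 = n % 7 by omega⟩

lemma digits1 {d : ℕ} (h1 : 1 ≤ d) (h2 : d < 10) : Nat.digits 10 d = [d] := by
  rw [Nat.digits_def' (by norm_num : (1:ℕ) < 10) h1, Nat.div_eq_of_lt h2, Nat.digits_zero,
    Nat.mod_eq_of_lt h2]

lemma digits2 {a b : ℕ} (ha : a < 10) (hb1 : 1 ≤ b) (hb : b < 10) :
    Nat.digits 10 (a + 10 * b) = [a, b] := by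
  rw [Nat.digits_def' (by norm_num : (1:ℕ) < 10) (by omega)]
  have h1 : (a + 10 * b) % 10 = a := by omega
  have h2 : (a + 10 * b) / 10 = b := by omega
  rw [h1, h2, digits1 hb1 hb]

lemma digits3 {a b c : ℕ} (ha : a < 10) (hb : b < 10) (hc1 : 1 ≤ c) (hc : c < 10) :
    Nat.digits 10 (a + 10 * b + 100 * c) = [a, b, c] := by
  rw [Nat.digits_def' (by norm_num : (1:ℕ) < 10) (by omega)]
  have h1 : (a + 10 * b + 100 * c) % 10 = a := by omega
  have h2 : (a + 10 * b + 100 * c) / 10 = b + 10 * c := by omega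
  rw [h1, h2, digits2 hb hc1 hc]

lemma subseq_val {s n : ℕ} (h : Subseq n s) :
    ∃ l ∈ (Nat.digits 10 s).sublists, n = Nat.ofDigits 10 l :=
  ⟨_, List.mem_sublists.mpr h, (Nat.ofDigits_digits 10 n).symm⟩

lemma sub2 {α : Type*} {l : List α} {a b : α} (h : l.Sublist [a, b]) :
    l = [] ∨ l = [a] ∨ l = [b] ∨ l = [a, b] := by
  cases h with
  | cons _ h1 => rcases List.sublist_singleton.mp h1 with rfl | rfl <;> simp
  | cons_cons _ h1 =>
    rcases List.sublist_singleton.mp h1 with rfl | rfl <;> simp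

lemma sub3 {α : Type*} {l : List α} {a b c : α} (h : l.Sublist [a, b, c]) :
    l = [] ∨ l = [a] ∨ l = [b] ∨ l = [c] ∨ l = [a, b] ∨ l = [a, c] ∨ l = [b, c] ∨
      l = [a, b, c] := by
  cases h with
  | cons _ h1 => rcases sub2 h1 with rfl | rfl | rfl | rfl <;> simp
  | cons_cons _ h1 =>
    rcases sub2 h1 with rfl | rfl | rfl | rfl <;> simp

theorem minimalSet_squares_mod_seven :
    minimalSet {n : ℕ | 1 ≤ n ∧ ∃ x : ℕ, 1 ≤ x ∧ x ^ 2 ≡ n [MOD 7]} =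
      {1, 2, 4, 7, 8, 9, 30, 35, 36, 50, 53, 56, 60, 63, 65, 333, 555, 666} := by
  ext s
  simp only [minimalSet, Set.mem_setOf_eq, Set.mem_insert_iff, Set.mem_singleton_iff]
  constructor
  · rintro ⟨hS, hmin⟩
    obtain ⟨h1, hm⟩ := (memS_iff s).mp hS
    by_cases h10 : s < 10
    · omega
    push_neg at h10
    by_cases hall : ∀ x ∈ Nat.digits 10 s, x = 0 ∨ x = 3 ∨ x = 5 ∨ x = 6
    · by_cases h100 : s < 100
      · -- two-digit case: enumerate via omega
        have hd2 : Nat.digits 10 s = [s % 10, s / 10] := by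
          have h := digits2 (a := s % 10) (b := s / 10) (Nat.mod_lt _ (by norm_num))
            (by omega) (by omega)
          rwa [Nat.mod_add_div] at h
        have ha := hall (s % 10) (by rw [hd2]; simp)
        have hb := hall (s / 10) (by rw [hd2]; simp)
        omega
      push_neg at h100
      -- all digits in {0,3,5,6}, s ≥ 100
      have hsne : s ≠ 0 := by omega
      have hne : Nat.digits 10 s ≠ [] := Nat.digits_ne_nil_iff_ne_zero.mpr hsne
      set L := Nat.digits 10 s with hLdef
      set d := L.getLast hne with hddef
      have hd0 : d ≠ 0 := Nat.getLast_digit_ne_zero 10 hsne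
      have hdmem : d ∈ L := List.getLast_mem hne
      have hd : d = 3 ∨ d = 5 ∨ d = 6 := by have := hall d hdmem; omega
      have hsplit : L.dropLast ++ [d] = L := List.dropLast_append_getLast hne
      by_cases hrep : ∀ e ∈ L.dropLast, e = d
      · -- L is a replicate of d
        have hall' : ∀ e ∈ L, e = d := by
          intro e he
          rw [← hsplit] at he
          rcases List.mem_append.mp he with h | h
          · exact hrep e h
          · simpa using h
        have hLrep : L = List.replicate L.length d := List.eq_replicate_length.mpr hall'
        have hlen3 : 3 ≤ L.length := by
          by_contra hcon
          have hs : s < 10 ^ L.length := Nat.lt_base_pow_length_digits (by norm_num)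
          have h2 : L.length ≤ 2 := by omega
          have : (10:ℕ) ^ L.length ≤ 10 ^ 2 := Nat.pow_le_pow_right (by norm_num) h2
          norm_num at this
          omega
        rcases eq_or_lt_of_le hlen3 with hlen | hlen
        · -- exactly three digits: s = 111 * d
          have hs' : Nat.ofDigits 10 L = s := Nat.ofDigits_digits 10 s
          rw [hLrep, ← hlen] at hs'
          simp [Nat.ofDigits_cons, Nat.ofDigits_nil, List.replicate_succ] at hs'
          omega
        · -- at least four digits: 111 * d is a smaller subsequence
          exfalso
          have hlow : (10:ℕ) ^ L.length ≤ 10 * s :=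
            Nat.base_pow_length_digits_le 10 s (by norm_num) hsne
          have hp : (10:ℕ) ^ 4 ≤ 10 ^ L.length := Nat.pow_le_pow_right (by norm_num) (by omega)
          norm_num at hp
          have hs1000 : 1000 ≤ s := by omega
          have hsub : Subseq (111 * d) s := by
            unfold Subseq
            have h3 : 111 * d = d + 10 * d + 100 * d := by ring
            rw [h3, digits3 (by omega) (by omega) (by omega) (by omega), ← hLdef, hLrep]
            exact List.sublist_replicate_iff.mpr ⟨3, by omega, rfl⟩
          exact hmin ⟨111 * d, (memS_iff (111 * d)).mpr ⟨by omega, by omega⟩, by omega, hsub⟩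
      · -- some digit in dropLast differs from d: two-digit subsequence
        exfalso
        push_neg at hrep
        obtain ⟨e, hedrop, hed⟩ := hrep
        have hemem : e ∈ L := (List.dropLast_sublist L).subset hedrop
        have he : e = 0 ∨ e = 3 ∨ e = 5 ∨ e = 6 := hall e hemem
        have hsub : Subseq (e + 10 * d) s := by
          unfold Subseq
          rw [digits2 (by omega) (by omega) (by omega), ← hLdef, ← hsplit]
          have h1 : ([e] ++ [d]).Sublist (L.dropLast ++ [d]) :=
            List.Sublist.append (List.singleton_sublist.mpr hedrop) (List.Sublist.refl [d])
          simpa using h1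
        exact hmin ⟨e + 10 * d, (memS_iff (e + 10 * d)).mpr ⟨by omega, by omega⟩,
          by omega, hsub⟩
    · -- some digit outside {0,3,5,6}: one-digit subsequence
      exfalso
      push_neg at hall
      obtain ⟨dd, hddmem, hddne⟩ := hall
      have hdd10 : dd < 10 := Nat.digits_lt_base (by norm_num) hddmem
      have hdd1 : 1 ≤ dd := by omega
      have hsub : Subseq dd s := by
        unfold Subseq
        rw [digits1 hdd1 hdd10]
        exact List.singleton_sublist.mpr hddmem
      exact hmin ⟨dd, (memS_iff dd).mpr ⟨by omega, by omega⟩, by omega, hsub⟩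
  · intro hs
    have hmem : 1 ≤ s ∧ ∃ x : ℕ, 1 ≤ x ∧ x ^ 2 ≡ s [MOD 7] :=
      (memS_iff s).mpr ⟨by omega, by omega⟩
    refine ⟨hmem, ?_⟩
    rintro ⟨n, hnS, hlt, hsub⟩
    obtain ⟨hn1, hnm⟩ := (memS_iff n).mp hnS
    obtain ⟨l, hl, rfl⟩ := subseq_val hsub
    rcases hs with h | h | h | h | h | h | h | h | h | h | h | h | h | h | h | h | h | h <;>
      subst h <;> norm_num at hl <;>
      [skip; skip; skip; skip; skip; skip;
       rcases sub2 hl with rfl | rfl | rfl | rfl;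
       rcases sub2 hl with rfl | rfl | rfl | rfl;
       rcases sub2 hl with rfl | rfl | rfl | rfl;
       rcases sub2 hl with rfl | rfl | rfl | rfl;
       rcases sub2 hl with rfl | rfl | rfl | rfl;
       rcases sub2 hl with rfl | rfl | rfl | rfl;
       rcases sub2 hl with rfl | rfl | rfl | rfl;
       rcases sub2 hl with rfl | rfl | rfl | rfl;
       rcases sub2 hl with rfl | rfl | rfl | rfl;
       rcases sub3 hl with rfl | rfl | rfl | rfl | rfl | rfl | rfl | rfl;
       rcases sub3 hl with rfl | rfl | rfl | rfl | rfl | rfl | rfl | rfl;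
       rcases sub3 hl with rfl | rfl | rfl | rfl | rfl | rfl | rfl | rfl] <;>
      first
        | (rcases hl with rfl | rfl <;>
            simp only [Nat.ofDigits_cons, Nat.ofDigits_nil] at hn1 hnm hlt <;> omega)
        | (simp only [Nat.ofDigits_cons, Nat.ofDigits_nil] at hn1 hnm hlt <;> omega)
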